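/- Let f ∈ Diff¹_ω(D). If there exists a sequence (q_k) of positive integers such that d₁(f^{q_k}, id) → 0 as k → ∞ (the iterates f^{q_k} converge to the identity in the C¹ topology), then Cal₁(f) = 0. -/

import Mathlib

open MeasureTheory Metric Set Filter Topology
open scoped Real

noncomputable section

/-- The closed unit disk in `ℂ ≅ ℝ²`. -/
def Disk : Set ℂ := Metric.closedBall 0 1

/-- The unit circle, boundary of the closed unit disk. -/
def Circ : Set ℂ := Metric.sphere 0 1

/-- The standard Liouville form `λ_z(w) = (z₁ w₂ - z₂ w₁)/(2π)`, whose exterior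
derivative is the normalized area form `ω = (1/π) du ∧ dv`. -/
def lform (z w : ℂ) : ℝ := (z.re * w.im - z.im * w.re) / (2 * Real.pi)

/-- An element of `Diff¹_ω(D)`: a `C¹` diffeomorphism of the closed unit disk onto itself
whose Jacobian determinant equals `1` at every point. -/
structure SympDiff where
  toFun : ℂ → ℂ
  invFun : ℂ → ℂ
  mapsTo : Set.MapsTo toFun Disk Disk
  inv_mapsTo : Set.MapsTo invFun Disk Disk
  left_inv : ∀ z ∈ Disk, invFun (toFun z) = z
  right_inv : ∀ z ∈ Disk, toFun (invFun z) = z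
  contDiffOn : ContDiffOn ℝ 1 toFun Disk
  inv_contDiffOn : ContDiffOn ℝ 1 invFun Disk
  jacobian : ∀ z ∈ Disk,
    LinearMap.det (fderivWithin ℝ toFun Disk z).toLinearMap = 1

/-- `A` is an action function of `f`: a `C¹` function with `dA = f*λ - λ` on the disk. -/
def IsAction (f : SympDiff) (A : ℂ → ℝ) : Prop :=
  ContDiffOn ℝ 1 A Disk ∧
    ∀ z ∈ Disk, ∀ w : ℂ,
      fderivWithin ℝ A Disk z w =
        lform (f.toFun z) (fderivWithin ℝ f.toFun Disk z w) - lform z w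

/-- `μ` is a Borel probability measure concentrated on the unit circle and invariant
under `f|_{S¹}`. -/
def IsInvariantCircleMeasure (f : SympDiff) (μ : Measure ℂ) : Prop :=
  IsProbabilityMeasure μ ∧ μ Circᶜ = 0 ∧ Measure.map f.toFun μ = μ

/-- `A` is a normalized action function of `f`: an action function whose integral over the
circle with respect to some `f|_{S¹}`-invariant probability measure vanishes. -/
def IsNormalizedAction (f : SympDiff) (A : ℂ → ℝ) : Prop :=
  IsAction f A ∧
    ∃ μ : Measure ℂ, IsInvariantCircleMeasure f μ ∧ ∫ z, A z ∂μ = 0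

/-- The `C⁰` distance between two disk diffeomorphisms (given with their inverses). -/
def d0 (f fi g gi : ℂ → ℂ) : ℝ :=
  max (⨆ z : Disk, ‖f (z : ℂ) - g (z : ℂ)‖) (⨆ z : Disk, ‖fi (z : ℂ) - gi (z : ℂ)‖)

/-- The `C¹` distance between two disk diffeomorphisms (given with their inverses). -/
def d1 (f fi g gi : ℂ → ℂ) : ℝ :=
  max (d0 f fi g gi)
    (max (⨆ z : Disk, ‖fderivWithin ℝ f Disk (z : ℂ) - fderivWithin ℝ g Disk (z : ℂ)‖)
      (⨆ z : Disk, ‖fderivWithin ℝ fi Disk (z : ℂ) - fderivWithin ℝ gi Disk (z : ℂ)‖))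

/-! ### Auxiliary lemmas -/

lemma disk_compact : IsCompact Disk := isCompact_closedBall 0 1
lemma disk_convex : Convex ℝ Disk := convex_closedBall 0 1
lemma disk_uniqueDiff : UniqueDiffOn ℝ Disk :=
  uniqueDiffOn_convex disk_convex (by
    simp [Disk, interior_closedBall (0:ℂ) one_ne_zero])
lemma disk_measurable : MeasurableSet Disk := measurableSet_closedBall
lemma circ_subset_disk : Circ ⊆ Disk := sphere_subset_closedBall
lemma zero_mem_disk : (0:ℂ) ∈ Disk := by simp [Disk]
lemma norm_le_of_mem_disk {z : ℂ} (hz : z ∈ Disk) : ‖z‖ ≤ 1 := by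
  simpa [Disk, mem_closedBall_zero_iff] using hz

/-- The Liouville form at `z` as a continuous linear map. -/
def lclm (z : ℂ) : ℂ →L[ℝ] ℝ :=
  (2 * Real.pi)⁻¹ • (z.re • Complex.imCLM - z.im • Complex.reCLM)

lemma lclm_apply (z w : ℂ) : lclm z w = lform z w := by
  simp [lclm, lform, div_eq_inv_mul]
  try ring

lemma lclm_norm_le (z : ℂ) : ‖lclm z‖ ≤ ‖z‖ / Real.pi := by
  apply ContinuousLinearMap.opNorm_le_bound _ (by positivity)
  intro w
  rw [lclm_apply, lform, Real.norm_eq_abs, abs_div]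
  rw [abs_of_pos (by positivity : (0:ℝ) < 2 * Real.pi)]
  rw [div_le_iff₀ (by positivity : (0:ℝ) < 2 * Real.pi)]
  have h1 : |z.re * w.im - z.im * w.re| ≤ ‖z‖ * ‖w‖ + ‖z‖ * ‖w‖ := by
    refine (abs_sub _ _).trans ?_
    gcongr
    · rw [abs_mul]
      exact mul_le_mul (Complex.abs_re_le_norm z) (Complex.abs_im_le_norm w)
        (abs_nonneg _) (norm_nonneg _)
    · rw [abs_mul]
      exact mul_le_mul (Complex.abs_im_le_norm z) (Complex.abs_re_le_norm w)
        (abs_nonneg _) (norm_nonneg _)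
  calc |z.re * w.im - z.im * w.re| ≤ ‖z‖ * ‖w‖ + ‖z‖ * ‖w‖ := h1
    _ = ‖z‖ / Real.pi * ‖w‖ * (2 * Real.pi) := by
        field_simp
        ring

namespace SympDiff

variable (f : SympDiff)

lemma iter_mapsTo (n : ℕ) : Set.MapsTo (f.toFun^[n]) Disk Disk :=
  f.mapsTo.iterate n

lemma iter_contDiffOn (n : ℕ) : ContDiffOn ℝ 1 (f.toFun^[n]) Disk := by
  induction n with
  | zero => simpa using contDiffOn_id
  | succ n ih =>
      rw [Function.iterate_succ']
      exact f.contDiffOn.comp ih (f.iter_mapsTo n)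

lemma iter_left_inv (n : ℕ) : ∀ z ∈ Disk, (f.invFun^[n]) (f.toFun^[n] z) = z := by
  induction n with
  | zero => simp
  | succ n ih =>
      intro z hz
      rw [Function.iterate_succ', Function.iterate_succ]
      simp only [Function.comp_apply]
      rw [ih (f.toFun z) (f.mapsTo hz), f.left_inv z hz]

lemma iter_injOn (n : ℕ) : Set.InjOn (f.toFun^[n]) Disk := fun a ha b hb h => by
  have := f.iter_left_inv n a ha
  have hb' := f.iter_left_inv n b hb
  rw [← this, ← hb', h]

lemma iter_right_inv (n : ℕ) : ∀ z ∈ Disk, (f.toFun^[n]) (f.invFun^[n] z) = z := by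
  induction n with
  | zero => simp
  | succ n ih =>
      intro z hz
      rw [Function.iterate_succ_apply' f.toFun, Function.iterate_succ_apply f.invFun]
      rw [ih (f.invFun z) (f.inv_mapsTo hz), f.right_inv z hz]

lemma iter_image (n : ℕ) : f.toFun^[n] '' Disk = Disk := by
  apply Subset.antisymm ((f.iter_mapsTo n).image_subset)
  intro z hz
  exact ⟨f.invFun^[n] z, (MapsTo.iterate f.inv_mapsTo n) hz, f.iter_right_inv n z hz⟩

lemma hasDerivAt' (z : ℂ) (hz : z ∈ Disk) :
    HasFDerivWithinAt f.toFun (fderivWithin ℝ f.toFun Disk z) Disk z :=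
  ((f.contDiffOn.differentiableOn one_ne_zero) z hz).hasFDerivWithinAt

lemma iter_hasDeriv (n : ℕ) (z : ℂ) (hz : z ∈ Disk) :
    HasFDerivWithinAt (f.toFun^[n]) (fderivWithin ℝ (f.toFun^[n]) Disk z) Disk z :=
  (((f.iter_contDiffOn n).differentiableOn one_ne_zero) z hz).hasFDerivWithinAt

lemma iter_fderiv_succ (n : ℕ) (z : ℂ) (hz : z ∈ Disk) :
    fderivWithin ℝ (f.toFun^[n+1]) Disk z =
      (fderivWithin ℝ (f.toFun^[n]) Disk (f.toFun z)).comp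
        (fderivWithin ℝ f.toFun Disk z) := by
  have h : HasFDerivWithinAt (f.toFun^[n] ∘ f.toFun)
      ((fderivWithin ℝ (f.toFun^[n]) Disk (f.toFun z)).comp
        (fderivWithin ℝ f.toFun Disk z)) Disk z :=
    (f.iter_hasDeriv n (f.toFun z) (f.mapsTo hz)).comp z (f.hasDerivAt' z hz) f.mapsTo
  rw [← Function.iterate_succ] at h
  exact h.fderivWithin (disk_uniqueDiff z hz)

lemma iter_det (n : ℕ) : ∀ z ∈ Disk,
    LinearMap.det (fderivWithin ℝ (f.toFun^[n]) Disk z).toLinearMap = 1 := by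
  induction n with
  | zero =>
      intro z hz
      rw [Function.iterate_zero, fderivWithin_id (disk_uniqueDiff z hz)]
      simp
  | succ n ih =>
      intro z hz
      rw [f.iter_fderiv_succ n z hz, ContinuousLinearMap.toLinearMap_comp, LinearMap.det_comp,
        ih (f.toFun z) (f.mapsTo hz), f.jacobian z hz, mul_one]

end SympDiff

/-- The Birkhoff-type sum of the action function along the orbit. -/
def actSum (f : SympDiff) (A : ℂ → ℝ) (n : ℕ) (z : ℂ) : ℝ :=
  ∑ i ∈ Finset.range n, A (f.toFun^[i] z)

lemma actSum_succ (f : SympDiff) (A : ℂ → ℝ) (n : ℕ) (z : ℂ) :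
    actSum f A (n+1) z = actSum f A n (f.toFun z) + A z := by
  simp only [actSum, Finset.sum_range_succ']
  simp [Function.iterate_succ_apply]

lemma action_hasDeriv (f : SympDiff) (A : ℂ → ℝ) (hA : IsAction f A)
    (z : ℂ) (hz : z ∈ Disk) :
    HasFDerivWithinAt A
      ((lclm (f.toFun z)).comp (fderivWithin ℝ f.toFun Disk z) - lclm z) Disk z := by
  have hd := ((hA.1.differentiableOn one_ne_zero) z hz).hasFDerivWithinAt
  have heq : fderivWithin ℝ A Disk z
      = (lclm (f.toFun z)).comp (fderivWithin ℝ f.toFun Disk z) - lclm z := by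
    ext w
    simp only [ContinuousLinearMap.coe_sub', Pi.sub_apply,
      ContinuousLinearMap.coe_comp', Function.comp_apply, lclm_apply]
    exact hA.2 z hz w
  rwa [heq] at hd

lemma actSum_hasDeriv (f : SympDiff) (A : ℂ → ℝ) (hA : IsAction f A) (n : ℕ) :
    ∀ z ∈ Disk, HasFDerivWithinAt (actSum f A n)
      ((lclm (f.toFun^[n] z)).comp (fderivWithin ℝ (f.toFun^[n]) Disk z) - lclm z)
      Disk z := by
  induction n with
  | zero =>
      intro z hz
      have hfun : actSum f A 0 = fun _ => (0:ℝ) := by funext w; simp [actSum]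
      have h0 : (lclm (f.toFun^[0] z)).comp (fderivWithin ℝ (f.toFun^[0]) Disk z)
          - lclm z = 0 := by
        rw [Function.iterate_zero, fderivWithin_id (disk_uniqueDiff z hz)]
        simp
      rw [hfun, h0]
      exact hasFDerivWithinAt_const 0 z Disk
  | succ n ih =>
      intro z hz
      have h1 : HasFDerivWithinAt (fun y => actSum f A n (f.toFun y))
          (((lclm (f.toFun^[n] (f.toFun z))).comp
              (fderivWithin ℝ (f.toFun^[n]) Disk (f.toFun z))
            - lclm (f.toFun z)).comp (fderivWithin ℝ f.toFun Disk z)) Disk z :=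
        (ih (f.toFun z) (f.mapsTo hz)).comp z (f.hasDerivAt' z hz) f.mapsTo
      have h2 := action_hasDeriv f A hA z hz
      have h3 : HasFDerivWithinAt (fun y => actSum f A n (f.toFun y) + A y) _ Disk z :=
        h1.add h2
      have hfun : (fun y => actSum f A n (f.toFun y) + A y) = actSum f A (n+1) := by
        funext w; rw [actSum_succ]
      rw [hfun] at h3
      convert h3 using 1
      · rfl
      rw [f.iter_fderiv_succ n z hz]
      ext w
      simp only [ContinuousLinearMap.coe_sub', Pi.sub_apply, ContinuousLinearMap.add_apply,
        ContinuousLinearMap.coe_comp', Function.comp_apply, lclm_apply,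
        Function.iterate_succ_apply]
      ring

lemma actSum_fderiv_norm_le (f : SympDiff) (A : ℂ → ℝ) (hA : IsAction f A) (n : ℕ)
    (z : ℂ) (hz : z ∈ Disk) (ε : ℝ)
    (h0 : ‖f.toFun^[n] z - z‖ ≤ ε)
    (h1 : ‖fderivWithin ℝ (f.toFun^[n]) Disk z - ContinuousLinearMap.id ℝ ℂ‖ ≤ ε) :
    ‖fderivWithin ℝ (actSum f A n) Disk z‖ ≤ 2 * ε / Real.pi := by
  have hεnn : 0 ≤ ε := le_trans (norm_nonneg _) h0
  rw [(actSum_hasDeriv f A hA n z hz).fderivWithin (disk_uniqueDiff z hz)]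
  set Dd := fderivWithin ℝ (f.toFun^[n]) Disk z - ContinuousLinearMap.id ℝ ℂ with hDd
  have hsplit : (lclm (f.toFun^[n] z)).comp (fderivWithin ℝ (f.toFun^[n]) Disk z) - lclm z
      = (lclm (f.toFun^[n] z)).comp Dd + lclm (f.toFun^[n] z - z) := by
    rw [hDd]
    ext w
    simp only [ContinuousLinearMap.coe_sub', Pi.sub_apply, ContinuousLinearMap.add_apply,
      ContinuousLinearMap.coe_comp', Function.comp_apply, ContinuousLinearMap.coe_id',
      id_eq, lclm_apply, lform, Complex.sub_re, Complex.sub_im]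
    ring
  rw [hsplit]
  have hgz : ‖f.toFun^[n] z‖ ≤ 1 := norm_le_of_mem_disk (f.iter_mapsTo n hz)
  have hP : ‖(lclm (f.toFun^[n] z)).comp Dd‖ ≤ (1 / Real.pi) * ε := by
    refine (ContinuousLinearMap.opNorm_comp_le _ _).trans ?_
    apply mul_le_mul _ h1 (norm_nonneg _) (by positivity)
    refine (lclm_norm_le _).trans ?_
    rw [div_le_div_iff₀ Real.pi_pos Real.pi_pos]
    nlinarith [Real.pi_pos]
  have hQ : ‖lclm (f.toFun^[n] z - z)‖ ≤ ε / Real.pi := by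
    refine (lclm_norm_le _).trans ?_
    gcongr
  refine (norm_add_le _ _).trans ?_
  have hsum := add_le_add hP hQ
  calc _ ≤ (1 / Real.pi) * ε + ε / Real.pi := hsum
    _ = 2 * ε / Real.pi := by ring

/-- If some sequence of iterates of `f` converges to the identity in the
`C¹` topology, then `Cal₁(f) = 0`. -/
theorem cal_C1_rigidity (f : SympDiff) (q : ℕ → ℕ) (hq : ∀ k, 0 < q k)
    (hconv : Filter.Tendsto
      (fun k => d1 (f.toFun^[q k]) (f.invFun^[q k]) id id) Filter.atTop (nhds 0))
    (A : ℂ → ℝ) (hA : IsNormalizedAction f A) :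
    (1 / Real.pi) * ∫ z in Disk, A z = 0 := by
  obtain ⟨hAct, μ, ⟨hprob, hcirc, hmap⟩, hint⟩ := hA
  haveI := hprob
  have hdiskc : μ Diskᶜ = 0 :=
    measure_mono_null (Set.compl_subset_compl.2 circ_subset_disk) hcirc
  have hμae : ∀ᵐ x ∂μ, x ∈ Disk := by
    rw [MeasureTheory.ae_iff]
    simpa [Set.compl_def] using hdiskc
  have hres : μ.restrict Disk = μ := Measure.restrict_eq_self_of_ae_mem hμae
  have haemeas : ∀ n : ℕ, AEMeasurable (f.toFun^[n]) μ := fun n => by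
    rw [← hres]
    exact ((f.iter_contDiffOn n).continuousOn).aemeasurable disk_measurable
  have haef : AEMeasurable f.toFun μ := by simpa using haemeas 1
  have hAsm : AEStronglyMeasurable A μ := by
    rw [← hres]; exact (hAct.1.continuousOn).aestronglyMeasurable disk_measurable
  have hmapn : ∀ n : ℕ, Measure.map (f.toFun^[n]) μ = μ := by
    intro n
    induction n with
    | zero => simp
    | succ n ih =>
        rw [Function.iterate_succ']
        have h := AEMeasurable.map_map_of_aemeasurable
          (g := f.toFun) (f := f.toFun^[n]) (by rw [ih]; exact haef) (haemeas n)
        rw [← h, ih, hmap]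
  have hintn : ∀ n : ℕ, ∫ z, A (f.toFun^[n] z) ∂μ = 0 := by
    intro n
    have h := integral_map (haemeas n) (f := A) (by rw [hmapn n]; exact hAsm)
    rw [hmapn n] at h
    rw [← h, hint]
  obtain ⟨M, hM⟩ := disk_compact.exists_bound_of_continuousOn hAct.1.continuousOn
  have hInt : ∀ n : ℕ, Integrable (fun z => A (f.toFun^[n] z)) μ := by
    intro n
    refine Integrable.mono' (integrable_const M) ?_ ?_
    · rw [← hres]
      exact ((hAct.1.continuousOn).comp ((f.iter_contDiffOn n).continuousOn)
        (f.iter_mapsTo n)).aestronglyMeasurable disk_measurable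
    · filter_upwards [hμae] with x hx
      exact hM _ ((f.iter_mapsTo n) hx)
  have hBint : ∀ n : ℕ, Integrable (actSum f A n) μ :=
    fun n => integrable_finset_sum _ (fun i _ => hInt i)
  have hBzero : ∀ n : ℕ, ∫ z, actSum f A n z ∂μ = 0 := by
    intro n
    calc ∫ z, actSum f A n z ∂μ
        = ∑ i ∈ Finset.range n, ∫ z, A (f.toFun^[i] z) ∂μ :=
          integral_finset_sum _ (fun i _ => hInt i)
      _ = 0 := by simp [hintn]
  have hVlt : volume Disk < ⊤ := disk_compact.measure_lt_top
  set V := (volume Disk).toReal with hV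
  have hVnn : 0 ≤ V := ENNReal.toReal_nonneg
  have hCoV : ∀ n : ℕ, ∫ z in Disk, A (f.toFun^[n] z) = ∫ z in Disk, A z := by
    intro n
    have h := integral_image_eq_integral_abs_det_fderiv_smul volume disk_measurable
      (fun x hx => f.iter_hasDeriv n x hx) (f.iter_injOn n) A
    rw [f.iter_image n] at h
    rw [h]
    apply setIntegral_congr_fun disk_measurable
    intro x hx
    have hd : (fderivWithin ℝ (f.toFun^[n]) Disk x).det = 1 := f.iter_det n x hx
    simp [hd]
  have hIntOn : ∀ i : ℕ, IntegrableOn (fun z => A (f.toFun^[i] z)) Disk :=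
    fun i => ContinuousOn.integrableOn_compact' disk_compact disk_measurable
      ((hAct.1.continuousOn).comp ((f.iter_contDiffOn i).continuousOn) (f.iter_mapsTo i))
  have hsum : ∀ n : ℕ, ∫ z in Disk, actSum f A n z = n * ∫ z in Disk, A z := by
    intro n
    calc ∫ z in Disk, actSum f A n z
        = ∑ i ∈ Finset.range n, ∫ z in Disk, A (f.toFun^[i] z) :=
          integral_finset_sum _ (fun i _ => hIntOn i)
      _ = ∑ _i ∈ Finset.range n, ∫ z in Disk, A z :=
          Finset.sum_congr rfl (fun i _ => hCoV i)
      _ = n * ∫ z in Disk, A z := by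
          rw [Finset.sum_const, Finset.card_range, nsmul_eq_mul]
  have key : ∀ k, |∫ z in Disk, A z| ≤ (4 * V / Real.pi) *
      d1 (f.toFun^[q k]) (f.invFun^[q k]) id id := by
    intro k
    set n := q k with hn
    set ε := d1 (f.toFun^[n]) (f.invFun^[n]) id id with hε
    obtain ⟨C0, hC0⟩ := disk_compact.exists_bound_of_continuousOn
      (((f.iter_contDiffOn n).continuousOn).sub continuousOn_id)
    have bdd0 : BddAbove (Set.range fun z : Disk =>
        ‖f.toFun^[n] (z:ℂ) - id (z:ℂ)‖) := by
      refine ⟨C0, ?_⟩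
      rintro - ⟨z, rfl⟩
      simpa using hC0 z z.2
    have h0 : ∀ z ∈ Disk, ‖f.toFun^[n] z - z‖ ≤ ε := by
      intro z hz
      have h := le_ciSup bdd0 (⟨z, hz⟩ : Disk)
      calc ‖f.toFun^[n] z - z‖
          = ‖f.toFun^[n] (⟨z, hz⟩ : Disk).1 - id (⟨z, hz⟩ : Disk).1‖ := by simp
        _ ≤ ⨆ z : Disk, ‖f.toFun^[n] (z:ℂ) - id (z:ℂ)‖ := h
        _ ≤ d0 (f.toFun^[n]) (f.invFun^[n]) id id := le_max_left _ _
        _ ≤ ε := le_max_left _ _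
    have hidc : ContinuousOn (fun z => fderivWithin ℝ (id : ℂ → ℂ) Disk z) Disk :=
      continuousOn_const.congr (fun z hz => fderivWithin_id (disk_uniqueDiff z hz))
    obtain ⟨C1, hC1⟩ := disk_compact.exists_bound_of_continuousOn
      (((f.iter_contDiffOn n).continuousOn_fderivWithin disk_uniqueDiff le_rfl).sub hidc)
    have bdd1 : BddAbove (Set.range fun z : Disk =>
        ‖fderivWithin ℝ (f.toFun^[n]) Disk (z:ℂ) - fderivWithin ℝ id Disk (z:ℂ)‖) := by
      refine ⟨C1, ?_⟩
      rintro - ⟨z, rfl⟩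
      exact hC1 z z.2
    have h1 : ∀ z ∈ Disk,
        ‖fderivWithin ℝ (f.toFun^[n]) Disk z - ContinuousLinearMap.id ℝ ℂ‖ ≤ ε := by
      intro z hz
      have h := le_ciSup bdd1 (⟨z, hz⟩ : Disk)
      rw [fderivWithin_id (disk_uniqueDiff z hz)] at h
      calc ‖fderivWithin ℝ (f.toFun^[n]) Disk z - ContinuousLinearMap.id ℝ ℂ‖
          ≤ ⨆ z : Disk, ‖fderivWithin ℝ (f.toFun^[n]) Disk (z:ℂ)
              - fderivWithin ℝ id Disk (z:ℂ)‖ := h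
        _ ≤ max (⨆ z : Disk, ‖fderivWithin ℝ (f.toFun^[n]) Disk (z:ℂ)
              - fderivWithin ℝ id Disk (z:ℂ)‖)
            (⨆ z : Disk, ‖fderivWithin ℝ (f.invFun^[n]) Disk (z:ℂ)
              - fderivWithin ℝ id Disk (z:ℂ)‖) := le_max_left _ _
        _ ≤ ε := le_max_right _ _
    have hεnn : 0 ≤ ε := le_trans (norm_nonneg _) (h0 0 zero_mem_disk)
    set L := 2 * ε / Real.pi with hL
    have hLnn : 0 ≤ L := by positivity
    have hDbound : ∀ z ∈ Disk, ‖fderivWithin ℝ (actSum f A n) Disk z‖ ≤ L :=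
      fun z hz => actSum_fderiv_norm_le f A hAct n z hz ε (h0 z hz) (h1 z hz)
    have hdiff : DifferentiableOn ℝ (actSum f A n) Disk :=
      fun z hz => (actSum_hasDeriv f A hAct n z hz).differentiableWithinAt
    have hLip : ∀ z ∈ Disk, ∀ w ∈ Disk,
        ‖actSum f A n z - actSum f A n w‖ ≤ L * 2 := by
      intro z hz w hw
      calc ‖actSum f A n z - actSum f A n w‖ ≤ L * ‖z - w‖ :=
            Convex.norm_image_sub_le_of_norm_fderivWithin_le hdiff hDbound disk_convex hw hz
        _ ≤ L * 2 := by
            apply mul_le_mul_of_nonneg_left _ hLnn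
            calc ‖z - w‖ ≤ ‖z‖ + ‖w‖ := norm_sub_le _ _
              _ ≤ 1 + 1 := add_le_add (norm_le_of_mem_disk hz) (norm_le_of_mem_disk hw)
              _ = 2 := by norm_num
    have hzbound : ∀ z ∈ Disk, ‖actSum f A n z‖ ≤ L * 2 := by
      intro z hz
      have heq : actSum f A n z = ∫ w, (actSum f A n z - actSum f A n w) ∂μ := by
        rw [integral_sub (integrable_const _) (hBint n), hBzero n, integral_const]
        simp
      rw [heq]
      calc ‖∫ w, (actSum f A n z - actSum f A n w) ∂μ‖
          ≤ (L * 2) * (μ Set.univ).toReal :=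
            norm_integral_le_of_norm_le_const
              (by filter_upwards [hμae] with w hw; exact hLip z hz w hw)
        _ = L * 2 := by simp
    have hIB : ‖∫ z in Disk, actSum f A n z‖ ≤ (L * 2) * V := by
      apply norm_setIntegral_le_of_norm_le_const_ae' hVlt
      · exact Filter.Eventually.of_forall (fun x hx => hzbound x hx)
    rw [hsum n] at hIB
    have hn1 : (1:ℝ) ≤ (n:ℝ) := by exact_mod_cast hq k
    have hfin : |∫ z in Disk, A z| ≤ (L * 2) * V := by
      rw [Real.norm_eq_abs, abs_mul, abs_of_nonneg
        (by positivity : (0:ℝ) ≤ (n:ℝ))] at hIB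
      calc |∫ z in Disk, A z| = 1 * |∫ z in Disk, A z| := (one_mul _).symm
        _ ≤ (n:ℝ) * |∫ z in Disk, A z| :=
            mul_le_mul_of_nonneg_right hn1 (abs_nonneg _)
        _ ≤ (L * 2) * V := hIB
    calc |∫ z in Disk, A z| ≤ (L * 2) * V := hfin
      _ = (4 * V / Real.pi) * ε := by rw [hL]; ring
  have htend : Tendsto (fun k => (4 * V / Real.pi) *
      d1 (f.toFun^[q k]) (f.invFun^[q k]) id id) atTop (𝓝 0) := by
    simpa using hconv.const_mul (4 * V / Real.pi)
  have habs : |∫ z in Disk, A z| ≤ 0 := ge_of_tendsto' htend key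
  have hzero : ∫ z in Disk, A z = 0 :=
    abs_eq_zero.1 (le_antisymm habs (abs_nonneg _))
  rw [hzero, mul_zero]
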